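/- arXiv:1712.06883 — 2 statements merged into one kernel-verified Lean document; each statement's English description precedes it below -/
import Mathlib

section
/- For every Ẽ < 0 there exists a constant C_Ẽ (independent of Λ and ω) with the following property: if Λ ⊂ ℤ^d is a finite box, E ≤ Ẽ is an eigenvalue of H_{ω,Λ}, and ψ ∈ ℓ²(Λ) is a corresponding eigenvector, then ‖ψ‖ ≤ C_Ẽ · ‖χ_{Λ∩Γ} ψ‖, where χ_{Λ∩Γ} denotes the coordinate projection onto the sites of Λ lying in Γ. -/
open MeasureTheory ENNReal Filter

noncomputable section

/-- Sites of the lattice `ℤ^d`. -/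
abbrev Site (d : ℕ) := Fin d → ℤ

/-- `n ∈ Γ = M ℤ^d`. -/
def inGamma (M : ℕ) {d : ℕ} (n : Site d) : Prop := ∀ i, (M : ℤ) ∣ n i

instance {M d : ℕ} : DecidablePred (inGamma M (d := d)) := fun _ =>
  Fintype.decidableForallFintype

/-- ℓ¹ (graph) distance on `ℤ^d`. -/
def dist1 {d : ℕ} (x y : Site d) : ℤ := ∑ i, |x i - y i|

/-- The sporadic random potential: `V_ω(n) = ω n` for `n ∈ Γ`, `0` otherwise. -/
def sporadicV (M : ℕ) {d : ℕ} (ω : Site d → ℝ) (n : Site d) : ℝ :=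
  if inGamma M n then ω n else 0

/-- The matrix of `H_ω = H_0 + λ V_ω` restricted to a finite set `Λ ⊂ ℤ^d`:
`H_{ω,Λ} = χ_Λ H_ω χ_Λ`. -/
def HBox {d : ℕ} (M : ℕ) (lam : ℝ) (ω : Site d → ℝ) (Λ : Finset (Site d)) :
    Matrix Λ Λ ℝ := fun x y =>
  if (x : Site d) = (y : Site d) then 2 * d + lam * sporadicV M ω x
  else if dist1 (x : Site d) (y : Site d) = 1 then -1 else 0

lemma HBox_isHermitian {d : ℕ} (M : ℕ) (lam : ℝ) (ω : Site d → ℝ) (Λ : Finset (Site d)) :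
    (HBox M lam ω Λ).IsHermitian := by
  ext x y
  simp only [HBox, Matrix.conjTranspose_apply, star_trivial]
  have h1 : ((y : Site d) = (x : Site d)) ↔ ((x : Site d) = (y : Site d)) := eq_comm
  have h2 : dist1 (y : Site d) (x : Site d) = dist1 (x : Site d) (y : Site d) := by
    unfold dist1; exact Finset.sum_congr rfl fun i _ => abs_sub_comm _ _
  by_cases h : (x : Site d) = (y : Site d)
  · simp [h, Subtype.ext h]
  · have h' : ¬((y : Site d) = (x : Site d)) := fun hh => h hh.symm
    simp [h, h', h2]

/-- The number of eigenvalues (counted with multiplicity) of a matrix in a set `I ⊆ ℝ`;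
for a Hermitian matrix this is `tr E_A(I)`. -/
def eigCount {n : Type*} [Fintype n] [DecidableEq n] (A : Matrix n n ℝ) (I : Set ℝ) : ℕ := by
  classical exact (A.charpoly.roots.filter (· ∈ I)).card

/-- The cube `Λ_L` of side length `L` centered at `0`: the points `x` with
`-L/2 < x ν ≤ L/2`; it contains `L^d` points. -/
def cube (d L : ℕ) : Finset (Site d) :=
  Finset.Icc (fun _ => (L : ℤ) / 2 - L + 1) (fun _ => (L : ℤ) / 2)

/-- `ℙ` makes the coordinates `(ω n)` i.i.d. with common distribution `μ`. -/
def IsIIDwith {d : ℕ} (ℙ : Measure (Site d → ℝ)) (μ : Measure ℝ) : Prop :=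
  IsProbabilityMeasure ℙ ∧
    ProbabilityTheory.iIndepFun (fun n (ω : Site d → ℝ) => ω n) ℙ ∧
    ∀ n : Site d, ℙ.map (fun ω => ω n) = μ

/-- The standing assumptions on the single–site distribution `μ`: it is a probability
measure with a bounded density and compact support, its support contains more than one
point, and `inf supp μ < 0`. -/
structure GoodMeasure (μ : Measure ℝ) : Prop where
  prob : IsProbabilityMeasure μ
  boundedDensity : ∃ ρ : ℝ → ℝ, (∀ x, 0 ≤ ρ x) ∧ (∃ B, ∀ x, ρ x ≤ B) ∧
    μ = volume.withDensity (fun x => ENNReal.ofReal (ρ x))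
  compactSupport : ∃ K : Set ℝ, IsCompact K ∧ μ Kᶜ = 0
  nontrivialSupport : ∃ x y : ℝ, x ≠ y ∧ (∀ ε > 0, 0 < μ (Metric.ball x ε)) ∧
    (∀ ε > 0, 0 < μ (Metric.ball y ε))
  negSupport : ∃ x < (0:ℝ), ∀ ε > 0, 0 < μ (Metric.ball x ε)

end
noncomputable section

lemma dist1_self {d : ℕ} (x : Site d) : dist1 x x = 0 := by simp [dist1]

lemma dist1_comm {d : ℕ} (x y : Site d) : dist1 x y = dist1 y x := by
  unfold dist1; exact Finset.sum_congr rfl fun i _ => abs_sub_comm _ _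

lemma dist1_eq_one {d : ℕ} {x y : Site d} (h : dist1 x y = 1) :
    ∃ i : Fin d, ∃ b : Bool, y = Function.update x i (x i + if b then 1 else -1) := by
  classical
  have habs : ∀ j, 0 ≤ |x j - y j| := fun j => abs_nonneg _
  have hex : ∃ i, |x i - y i| ≠ 0 := by
    by_contra hc
    push_neg at hc
    have h0 : dist1 x y = 0 := Finset.sum_eq_zero fun i _ => hc i
    omega
  obtain ⟨i, hi⟩ := hex
  have hsumsplit : |x i - y i| + ∑ j ∈ Finset.univ.erase i, |x j - y j| = dist1 x y :=
    Finset.add_sum_erase Finset.univ (fun j => |x j - y j|) (Finset.mem_univ i)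
  have herase_nonneg : 0 ≤ ∑ j ∈ Finset.univ.erase i, |x j - y j| :=
    Finset.sum_nonneg fun j _ => habs j
  have hti : 1 ≤ |x i - y i| := by
    have := habs i; omega
  have herase0 : ∑ j ∈ Finset.univ.erase i, |x j - y j| = 0 := by omega
  have hall0 : ∀ j ∈ Finset.univ.erase i, |x j - y j| = 0 :=
    (Finset.sum_eq_zero_iff_of_nonneg fun j _ => habs j).mp herase0
  have hti1 : |x i - y i| = 1 := by omega
  have hcase : x i - y i = 1 ∨ x i - y i = -1 := by
    rcases abs_eq (by norm_num : (0:ℤ) ≤ 1) |>.mp hti1 with h1 | h1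
    · exact Or.inl h1
    · exact Or.inr h1
  obtain ⟨b, hb⟩ : ∃ b : Bool, y i = x i + (if b then 1 else -1) := by
    rcases hcase with h1 | h1
    · exact ⟨false, by simp; omega⟩
    · exact ⟨true, by simp; omega⟩
  refine ⟨i, b, ?_⟩
  funext j
  by_cases hj : j = i
  · subst hj
    simpa [Function.update_self] using hb
  · have h0 : |x j - y j| = 0 := hall0 j (Finset.mem_erase.mpr ⟨hj, Finset.mem_univ j⟩)
    have h0' : x j - y j = 0 := abs_eq_zero.mp h0
    have this : x j = y j := by omega
    simp [Function.update_of_ne hj, this]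

lemma neighbor_card {d : ℕ} (Λ : Finset (Site d)) (x : Site d) :
    (Finset.univ.filter (fun y : {z // z ∈ Λ} => dist1 x y.val = 1)).card ≤ 2 * d := by
  classical
  set f : Fin d × Bool → Site d := fun p => Function.update x p.1 (x p.1 + if p.2 then 1 else -1)
  have hcard :
      (Finset.univ.filter (fun y : {z // z ∈ Λ} => dist1 x y.val = 1)).card ≤
        (Finset.image f Finset.univ).card := by
    have hmem : ∀ y ∈ Finset.univ.filter (fun y : {z // z ∈ Λ} => dist1 x y.val = 1),
        (y : Site d) ∈ Finset.image f Finset.univ := by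
      intro y hy
      simp only [Finset.mem_filter] at hy
      obtain ⟨i, b, hb⟩ := dist1_eq_one hy.2
      exact Finset.mem_image.mpr ⟨(i, b), Finset.mem_univ _, hb.symm⟩
    exact Finset.card_le_card_of_injOn (fun y => (y : Site d)) hmem
      (fun u _ v _ h => Subtype.ext h)
  calc (Finset.univ.filter (fun y : {z // z ∈ Λ} => dist1 x y.val = 1)).card
      ≤ (Finset.image f Finset.univ).card := hcard
    _ ≤ (Finset.univ : Finset (Fin d × Bool)).card := Finset.card_image_le
    _ = 2 * d := by simp [Finset.card_univ]; ring

lemma sum_ite_neighbor_le {d : ℕ} (Λ : Finset (Site d)) (x : Site d) {c : ℝ} (hc : 0 ≤ c) :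
    ∑ y : {z // z ∈ Λ}, (if dist1 x y.val = 1 then c else 0) ≤ (2 * d : ℝ) * c := by
  classical
  have h1 : ∑ y : {z // z ∈ Λ}, (if dist1 x y.val = 1 then c else 0) =
      ((Finset.univ.filter (fun y : {z // z ∈ Λ} => dist1 x y.val = 1)).card : ℝ) * c := by
    rw [← Finset.sum_filter, Finset.sum_const, nsmul_eq_mul]
  rw [h1]
  apply mul_le_mul_of_nonneg_right _ hc
  exact_mod_cast neighbor_card Λ x


set_option maxHeartbeats 1000000 in
/-- For every `Ẽ < 0` there is a constant `C_Ẽ` (independent of `Λ` and `ω`) such that: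
if `Λ ⊂ ℤ^d` is a finite box, `E ≤ Ẽ` is an eigenvalue of `H_{ω,Λ}` and `ψ` a
corresponding eigenvector, then `‖ψ‖ ≤ C_Ẽ ‖χ_{Λ∩Γ} ψ‖`. -/
theorem eigenfunction_gamma_bound
    (d M : ℕ) (hd : 1 ≤ d) (hM : 2 ≤ M)
    (lam : ℝ) (hlam : 0 < lam)
    (Etil : ℝ) (hEtil : Etil < 0) :
    ∃ C : ℝ, ∀ a b : Site d, ∀ ω : Site d → ℝ, ∀ E : ℝ, E ≤ Etil →
      ∀ ψ : {x // x ∈ Finset.Icc a b} → ℝ,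
        (HBox M lam ω (Finset.Icc a b)).mulVec ψ = E • ψ →
        Real.sqrt (∑ x, ψ x ^ 2) ≤
          C * Real.sqrt (∑ x : {x // x ∈ Finset.Icc a b}, if inGamma M x.val then ψ x ^ 2 else 0) := by
  classical
  refine ⟨Real.sqrt (1 + (2 * d / Etil) ^ 2), ?_⟩
  intro a b ω E hE ψ hψ
  set H := HBox M lam ω (Finset.Icc a b) with hHdef
  have heig : ∀ x : {z // z ∈ Finset.Icc a b}, ∑ y : {z // z ∈ Finset.Icc a b}, H x y * ψ y = E * ψ x := by
    intro x
    have := congrFun hψ x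
    simpa [Matrix.mulVec, dotProduct] using this
  set Qv : {z // z ∈ Finset.Icc a b} → ℝ := fun x => if inGamma M x.val then 0 else ψ x with hQv
  set Pv : {z // z ∈ Finset.Icc a b} → ℝ := fun x => if inGamma M x.val then ψ x else 0 with hPv
  set S := ∑ x : {z // z ∈ Finset.Icc a b}, (if inGamma M x.val then ψ x ^ 2 else 0) with hSdef
  set T := ∑ x : {z // z ∈ Finset.Icc a b}, (if inGamma M x.val then 0 else ψ x ^ 2) with hTdef
  have hS0 : 0 ≤ S := Finset.sum_nonneg fun x _ => by
    by_cases h : inGamma M x.val <;> simp [h] <;> positivity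
  have hT0 : 0 ≤ T := Finset.sum_nonneg fun x _ => by
    by_cases h : inGamma M x.val <;> simp [h] <;> positivity
  have hPQ : ∀ x, ψ x = Qv x + Pv x := fun x => by
    by_cases h : inGamma M x.val <;> simp [hQv, hPv, h]
  have hQsq : ∀ x, Qv x ^ 2 = (if inGamma M x.val then 0 else ψ x ^ 2) := fun x => by
    by_cases h : inGamma M x.val <;> simp [hQv, h]
  have hPsq : ∀ x, Pv x ^ 2 = (if inGamma M x.val then ψ x ^ 2 else 0) := fun x => by
    by_cases h : inGamma M x.val <;> simp [hPv, h]
  have hQP0 : ∀ x, Qv x * Pv x = 0 := fun x => by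
    by_cases h : inGamma M x.val <;> simp [hQv, hPv, h]
  have hTQ : ∑ x : {z // z ∈ Finset.Icc a b}, Qv x ^ 2 = T := by
    rw [hTdef]; exact Finset.sum_congr rfl fun x _ => hQsq x
  have hSP : ∑ x : {z // z ∈ Finset.Icc a b}, Pv x ^ 2 = S := by
    rw [hSdef]; exact Finset.sum_congr rfl fun x _ => hPsq x
  -- Main identity : E * T = QF + X
  set QF := ∑ x : {z // z ∈ Finset.Icc a b}, ∑ y : {z // z ∈ Finset.Icc a b}, H x y * Qv x * Qv y with hQFdef
  set X := ∑ x : {z // z ∈ Finset.Icc a b}, ∑ y : {z // z ∈ Finset.Icc a b}, H x y * Qv x * Pv y with hXdef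
  have hET : E * T = QF + X := by
    have h1 : E * T = ∑ x : {z // z ∈ Finset.Icc a b}, Qv x * (E * ψ x) := by
      rw [hTdef, Finset.mul_sum]
      refine Finset.sum_congr rfl fun x _ => ?_
      by_cases h : inGamma M x.val <;> simp [hQv, h] <;> ring
    rw [h1]
    calc ∑ x : {z // z ∈ Finset.Icc a b}, Qv x * (E * ψ x)
        = ∑ x : {z // z ∈ Finset.Icc a b}, ∑ y : {z // z ∈ Finset.Icc a b}, H x y * Qv x * ψ y := by
          refine Finset.sum_congr rfl fun x _ => ?_
          rw [← heig x, Finset.mul_sum]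
          exact Finset.sum_congr rfl fun y _ => by ring
      _ = QF + X := by
          rw [hQFdef, hXdef, ← Finset.sum_add_distrib]
          refine Finset.sum_congr rfl fun x _ => ?_
          rw [← Finset.sum_add_distrib]
          refine Finset.sum_congr rfl fun y _ => ?_
          rw [hPQ y]; ring
  -- neighbor sums
  have hNA : (∑ x : {z // z ∈ Finset.Icc a b}, ∑ y : {z // z ∈ Finset.Icc a b},
      (if dist1 x.val y.val = 1 then Qv x ^ 2 else 0)) ≤ 2 * d * T := by
    calc ∑ x : {z // z ∈ Finset.Icc a b}, ∑ y : {z // z ∈ Finset.Icc a b},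
        (if dist1 x.val y.val = 1 then Qv x ^ 2 else 0)
        ≤ ∑ x : {z // z ∈ Finset.Icc a b}, (2 * d : ℝ) * Qv x ^ 2 :=
          Finset.sum_le_sum fun x _ => sum_ite_neighbor_le (Finset.Icc a b) x.val (sq_nonneg _)
      _ = 2 * d * T := by rw [← Finset.mul_sum, hTQ]
  have hNB : (∑ x : {z // z ∈ Finset.Icc a b}, ∑ y : {z // z ∈ Finset.Icc a b},
      (if dist1 x.val y.val = 1 then Qv y ^ 2 else 0)) ≤ 2 * d * T := by
    rw [Finset.sum_comm]
    calc ∑ y : {z // z ∈ Finset.Icc a b}, ∑ x : {z // z ∈ Finset.Icc a b},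
        (if dist1 x.val y.val = 1 then Qv y ^ 2 else 0)
        ≤ ∑ y : {z // z ∈ Finset.Icc a b}, (2 * d : ℝ) * Qv y ^ 2 := by
          refine Finset.sum_le_sum fun y _ => ?_
          have h1 := sum_ite_neighbor_le (Finset.Icc a b) y.val (sq_nonneg (Qv y))
          calc ∑ x : {z // z ∈ Finset.Icc a b}, (if dist1 x.val y.val = 1 then Qv y ^ 2 else 0)
              = ∑ x : {z // z ∈ Finset.Icc a b}, (if dist1 y.val x.val = 1 then Qv y ^ 2 else 0) :=
                Finset.sum_congr rfl fun x _ => by rw [dist1_comm]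
            _ ≤ (2 * d : ℝ) * Qv y ^ 2 := h1
      _ = 2 * d * T := by rw [← Finset.mul_sum, hTQ]
  have hMB : (∑ x : {z // z ∈ Finset.Icc a b}, ∑ y : {z // z ∈ Finset.Icc a b},
      (if dist1 x.val y.val = 1 then Pv y ^ 2 else 0)) ≤ 2 * d * S := by
    rw [Finset.sum_comm]
    calc ∑ y : {z // z ∈ Finset.Icc a b}, ∑ x : {z // z ∈ Finset.Icc a b},
        (if dist1 x.val y.val = 1 then Pv y ^ 2 else 0)
        ≤ ∑ y : {z // z ∈ Finset.Icc a b}, (2 * d : ℝ) * Pv y ^ 2 := by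
          refine Finset.sum_le_sum fun y _ => ?_
          have h1 := sum_ite_neighbor_le (Finset.Icc a b) y.val (sq_nonneg (Pv y))
          calc ∑ x : {z // z ∈ Finset.Icc a b}, (if dist1 x.val y.val = 1 then Pv y ^ 2 else 0)
              = ∑ x : {z // z ∈ Finset.Icc a b}, (if dist1 y.val x.val = 1 then Pv y ^ 2 else 0) :=
                Finset.sum_congr rfl fun x _ => by rw [dist1_comm]
            _ ≤ (2 * d : ℝ) * Pv y ^ 2 := h1
      _ = 2 * d * S := by rw [← Finset.mul_sum, hSP]
  -- QF ≥ 0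
  have hQF : 0 ≤ QF := by
    have hterm : ∀ x y : {z // z ∈ Finset.Icc a b},
        (if x = y then (2 * d : ℝ) * Qv x ^ 2 else 0)
          - ((if dist1 x.val y.val = 1 then Qv x ^ 2 else 0)
              + (if dist1 x.val y.val = 1 then Qv y ^ 2 else 0)) / 2
          ≤ H x y * Qv x * Qv y := by
      intro x y
      by_cases hxy : x = y
      · subst hxy
        have hd1 : dist1 x.val x.val = 0 := dist1_self _
        have hne : ¬ dist1 x.val x.val = 1 := by rw [hd1]; norm_num
        have hH : H x x = 2 * d + lam * sporadicV M ω x.val := by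
          simp [hHdef, HBox]
        by_cases h : inGamma M x.val
        · have hq : Qv x = 0 := by simp [hQv, h]
          simp [hq, hne]
        · have hs : sporadicV M ω x.val = 0 := by simp [sporadicV, h]
          rw [hH, hs]
          simp only [hne, if_false, if_true, eq_self_iff_true, mul_zero, add_zero]
          nlinarith [sq_nonneg (Qv x)]
      · have hv : (x : Site d) ≠ (y : Site d) := fun h => hxy (Subtype.ext h)
        have hH : H x y = if dist1 x.val y.val = 1 then -1 else 0 := by
          simp [hHdef, HBox, hv]
        rw [hH]
        by_cases h : dist1 x.val y.val = 1
        · simp only [if_pos h, if_neg hxy]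
          nlinarith [sq_nonneg (Qv x - Qv y)]
        · simp [h, hxy]
    have h1 : ∑ x : {z // z ∈ Finset.Icc a b}, ∑ y : {z // z ∈ Finset.Icc a b},
        ((if x = y then (2 * d : ℝ) * Qv x ^ 2 else 0)
          - ((if dist1 x.val y.val = 1 then Qv x ^ 2 else 0)
              + (if dist1 x.val y.val = 1 then Qv y ^ 2 else 0)) / 2) ≤ QF := by
      rw [hQFdef]
      exact Finset.sum_le_sum fun x _ => Finset.sum_le_sum fun y _ => hterm x y
    have h2 : ∑ x : {z // z ∈ Finset.Icc a b}, ∑ y : {z // z ∈ Finset.Icc a b},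
        ((if x = y then (2 * d : ℝ) * Qv x ^ 2 else 0)
          - ((if dist1 x.val y.val = 1 then Qv x ^ 2 else 0)
              + (if dist1 x.val y.val = 1 then Qv y ^ 2 else 0)) / 2)
        = (∑ x : {z // z ∈ Finset.Icc a b}, ∑ y : {z // z ∈ Finset.Icc a b},
            (if x = y then (2 * d : ℝ) * Qv x ^ 2 else 0))
          - ((∑ x : {z // z ∈ Finset.Icc a b}, ∑ y : {z // z ∈ Finset.Icc a b},
              (if dist1 x.val y.val = 1 then Qv x ^ 2 else 0))
            + (∑ x : {z // z ∈ Finset.Icc a b}, ∑ y : {z // z ∈ Finset.Icc a b},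
              (if dist1 x.val y.val = 1 then Qv y ^ 2 else 0))) / 2 := by
      simp only [Finset.sum_sub_distrib, ← Finset.sum_div, Finset.sum_add_distrib]
    have h3 : (∑ x : {z // z ∈ Finset.Icc a b}, ∑ y : {z // z ∈ Finset.Icc a b},
        (if x = y then (2 * d : ℝ) * Qv x ^ 2 else 0)) = 2 * d * T := by
      rw [← hTQ, Finset.mul_sum]
      exact Finset.sum_congr rfl fun x _ => by simp
    rw [h2, h3] at h1
    linarith [hNA, hNB]
  -- cross term bound
  set A := -Etil / (2 * d) with hAdef
  have hdpos : (0:ℝ) < d := by exact_mod_cast Nat.lt_of_lt_of_le Nat.zero_lt_one hd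
  have hA : 0 < A := by
    rw [hAdef]
    apply div_pos (by linarith) (by positivity)
  have hX : -(A * d * T + d / A * S) ≤ X := by
    have hterm : ∀ x y : {z // z ∈ Finset.Icc a b},
        -(H x y * Qv x * Pv y) ≤
          (A * (if dist1 x.val y.val = 1 then Qv x ^ 2 else 0)
            + (1 / A) * (if dist1 x.val y.val = 1 then Pv y ^ 2 else 0)) / 2 := by
      intro x y
      by_cases hxy : x = y
      · subst hxy
        have hne : ¬ dist1 x.val x.val = 1 := by rw [dist1_self]; norm_num
        have h0 : H x x * Qv x * Pv x = 0 := by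
          rw [mul_assoc, hQP0 x, mul_zero]
        rw [h0]
        simp [hne]
      · have hv : (x : Site d) ≠ (y : Site d) := fun h => hxy (Subtype.ext h)
        have hH : H x y = if dist1 x.val y.val = 1 then -1 else 0 := by
          simp [hHdef, HBox, hv]
        rw [hH]
        by_cases h : dist1 x.val y.val = 1
        · simp only [if_pos h]
          have hAi : A * (1 / A) = 1 := by field_simp
          nlinarith [sq_nonneg (A * Qv x - Pv y), hA, hAi]
        · simp [h]
    have h1 : -X ≤ ∑ x : {z // z ∈ Finset.Icc a b}, ∑ y : {z // z ∈ Finset.Icc a b},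
        ((A * (if dist1 x.val y.val = 1 then Qv x ^ 2 else 0)
          + (1 / A) * (if dist1 x.val y.val = 1 then Pv y ^ 2 else 0)) / 2) := by
      rw [hXdef, ← Finset.sum_neg_distrib]
      refine Finset.sum_le_sum fun x _ => ?_
      rw [← Finset.sum_neg_distrib]
      exact Finset.sum_le_sum fun y _ => hterm x y
    have h2 : ∑ x : {z // z ∈ Finset.Icc a b}, ∑ y : {z // z ∈ Finset.Icc a b},
        ((A * (if dist1 x.val y.val = 1 then Qv x ^ 2 else 0)
          + (1 / A) * (if dist1 x.val y.val = 1 then Pv y ^ 2 else 0)) / 2)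
        = (A * (∑ x : {z // z ∈ Finset.Icc a b}, ∑ y : {z // z ∈ Finset.Icc a b},
            (if dist1 x.val y.val = 1 then Qv x ^ 2 else 0))
          + (1 / A) * (∑ x : {z // z ∈ Finset.Icc a b}, ∑ y : {z // z ∈ Finset.Icc a b},
            (if dist1 x.val y.val = 1 then Pv y ^ 2 else 0))) / 2 := by
      simp only [Finset.mul_sum, ← Finset.sum_div, Finset.sum_add_distrib]
    rw [h2] at h1
    have hb1 : A * (∑ x : {z // z ∈ Finset.Icc a b}, ∑ y : {z // z ∈ Finset.Icc a b},
        (if dist1 x.val y.val = 1 then Qv x ^ 2 else 0)) ≤ A * (2 * d * T) :=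
      mul_le_mul_of_nonneg_left hNA hA.le
    have hb2 : (1 / A) * (∑ x : {z // z ∈ Finset.Icc a b}, ∑ y : {z // z ∈ Finset.Icc a b},
        (if dist1 x.val y.val = 1 then Pv y ^ 2 else 0)) ≤ (1 / A) * (2 * d * S) :=
      mul_le_mul_of_nonneg_left hMB (by positivity)
    have he1 : A * (2 * d * T) / 2 = A * d * T := by ring
    have he2 : (1 / A) * (2 * d * S) / 2 = d / A * S := by ring
    linarith
  -- combine
  have hAd : A * d = -Etil / 2 := by
    rw [hAdef]; field_simp
  have hEtn : (0:ℝ) < -Etil := by linarith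
  have hkey : Etil ^ 2 * T ≤ 4 * d ^ 2 * S := by
    have h1 : (-Etil) * T ≤ (-E) * T := by
      apply mul_le_mul_of_nonneg_right _ hT0
      linarith
    have h2 : -E * T = -(QF + X) := by rw [← hET]; ring
    have h4 : -X ≤ A * d * T + d / A * S := by linarith [hX]
    have h5 : (-Etil) * T ≤ (-Etil / 2) * T + d / A * S := by
      rw [← hAd]; linarith
    have h6 : (-Etil / 2) * T ≤ d / A * S := by linarith
    have h7 : d / A = 2 * d ^ 2 / (-Etil) := by
      rw [hAdef, div_div_eq_mul_div]
      ring_nf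
    rw [h7] at h6
    have h8 := mul_le_mul_of_nonneg_left h6 hEtn.le
    have h9 : (-Etil) * (2 * (d:ℝ) ^ 2 / (-Etil) * S) = 2 * d ^ 2 * S := by
      have hne : Etil ≠ 0 := ne_of_lt hEtil
      field_simp
    rw [h9] at h8
    nlinarith [h8]
  have htotal : ∑ x : {z // z ∈ Finset.Icc a b}, ψ x ^ 2 = S + T := by
    rw [hSdef, hTdef, ← Finset.sum_add_distrib]
    refine Finset.sum_congr rfl fun x _ => ?_
    by_cases h : inGamma M x.val <;> simp [h]
  have hE2 : (0:ℝ) < Etil ^ 2 := by nlinarith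
  have hfin : ∑ x : {z // z ∈ Finset.Icc a b}, ψ x ^ 2 ≤ (1 + (2 * d / Etil) ^ 2) * S := by
    rw [htotal]
    have hT4 : T ≤ (2 * d / Etil) ^ 2 * S := by
      rw [div_pow, div_mul_eq_mul_div, le_div_iff₀ hE2]
      nlinarith [hkey]
    linarith
  calc Real.sqrt (∑ x : {z // z ∈ Finset.Icc a b}, ψ x ^ 2)
      ≤ Real.sqrt ((1 + (2 * d / Etil) ^ 2) * S) := Real.sqrt_le_sqrt hfin
    _ = Real.sqrt (1 + (2 * d / Etil) ^ 2) * Real.sqrt S := Real.sqrt_mul (by positivity) S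


end
end

section
/- (Decoupling lemma) Let μ be a probability measure on ℝ with a bounded density and compact support. Then for every s ∈ (0, 1/2) there is a constant D_s < ∞ such that for all α, β, γ ∈ ℂ: ∫ |x − α|^{−s} · |x − γ|^s · |x − β|^{−s} dμ(x) ≤ D_s · ( ∫ |x − γ|^s |x − β|^{−s} dμ(x) ) · ( ∫ |x − α|^{−s} dμ(x) ). -/
open MeasureTheory ENNReal

section DecouplingAux

lemma dcpl_nnE (z : ℂ) : (‖z‖₊ : ℝ≥0∞) = ENNReal.ofReal ‖z‖ := (ofReal_norm z).symm

lemma dcpl_anti {a b : ℝ≥0∞} {t : ℝ} (ht : 0 ≤ t) (h : a ≤ b) : b ^ (-t) ≤ a ^ (-t) := by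
  rw [ENNReal.rpow_neg, ENNReal.rpow_neg]
  exact ENNReal.inv_le_inv.mpr (ENNReal.rpow_le_rpow h ht)

lemma dcpl_up_pow {z : ℂ} {r t : ℝ} (ht : 0 ≤ t) (h0 : 0 < r) (h : ‖z‖ ≤ r) :
    (‖z‖₊ : ℝ≥0∞) ^ t ≤ ENNReal.ofReal (r ^ t) := by
  rw [dcpl_nnE, ← ENNReal.ofReal_rpow_of_pos h0]
  exact ENNReal.rpow_le_rpow (ENNReal.ofReal_le_ofReal h) ht

lemma dcpl_up_npow {z : ℂ} {r t : ℝ} (ht : 0 ≤ t) (h0 : 0 < r) (h : r ≤ ‖z‖) :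
    (‖z‖₊ : ℝ≥0∞) ^ (-t) ≤ ENNReal.ofReal (r ^ (-t)) := by
  rw [dcpl_nnE, ← ENNReal.ofReal_rpow_of_pos h0]
  exact dcpl_anti ht (ENNReal.ofReal_le_ofReal h)

lemma dcpl_lo_pow {z : ℂ} {r t : ℝ} (ht : 0 ≤ t) (h0 : 0 < r) (h : r ≤ ‖z‖) :
    ENNReal.ofReal (r ^ t) ≤ (‖z‖₊ : ℝ≥0∞) ^ t := by
  rw [dcpl_nnE, ← ENNReal.ofReal_rpow_of_pos h0]
  exact ENNReal.rpow_le_rpow (ENNReal.ofReal_le_ofReal h) ht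

lemma dcpl_lo_npow {z : ℂ} {r t : ℝ} (ht : 0 ≤ t) (h0 : 0 < r) (h : ‖z‖ ≤ r) :
    ENNReal.ofReal (r ^ (-t)) ≤ (‖z‖₊ : ℝ≥0∞) ^ (-t) := by
  rw [dcpl_nnE, ← ENNReal.ofReal_rpow_of_pos h0]
  exact dcpl_anti ht (ENNReal.ofReal_le_ofReal h)

lemma dcpl_re_le_norm (z : ℂ) : |z.re| ≤ ‖z‖ := by
  exact Complex.abs_re_le_norm z

lemma dcpl_meas (w : ℂ) (t : ℝ) : Measurable fun x : ℝ => (‖(x:ℂ) - w‖₊ : ℝ≥0∞) ^ t := by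
  have h1 : Continuous fun x : ℝ => (‖(x:ℂ) - w‖₊ : ℝ≥0∞) :=
    ENNReal.continuous_coe.comp ((Complex.continuous_ofReal.sub continuous_const).nnnorm)
  exact (ENNReal.continuous_rpow_const.comp h1).measurable

lemma dcpl_dbl {s : ℝ} (hs : 0 < s) (a : ℝ≥0∞) : a ^ (-s) * a ^ (-s) = a ^ (-(2*s)) := by
  rcases eq_or_ne a 0 with rfl | h0
  · rw [ENNReal.zero_rpow_of_neg (by linarith), ENNReal.zero_rpow_of_neg (by linarith)]
    simp
  rcases eq_or_ne a ⊤ with rfl | htop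
  · rw [ENNReal.top_rpow_of_neg (by linarith), ENNReal.top_rpow_of_neg (by linarith)]
    simp
  rw [← ENNReal.rpow_add _ _ h0 htop]
  ring_nf

lemma dcpl_sq_trick {s : ℝ} (hs : 0 < s) (a b : ℝ≥0∞) :
    a ^ (-s) * b ^ (-s) ≤ a ^ (-(2*s)) + b ^ (-(2*s)) := by
  rcases le_total a b with h | h
  · calc a ^ (-s) * b ^ (-s) ≤ a ^ (-s) * a ^ (-s) :=
        mul_le_mul_right (dcpl_anti hs.le h) _
      _ = a ^ (-(2*s)) := dcpl_dbl hs a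
      _ ≤ _ := le_self_add
  · calc a ^ (-s) * b ^ (-s) ≤ b ^ (-s) * b ^ (-s) :=
        mul_le_mul_left (dcpl_anti hs.le h) _
      _ = b ^ (-(2*s)) := dcpl_dbl hs b
      _ ≤ _ := le_add_self

lemma dcpl_helper0 {p L : ℝ} (hp0 : 0 < p) (hp1 : p < 1) (hL : 1 ≤ L) :
    ∫⁻ x in Set.Ioo (0:ℝ) L, ENNReal.ofReal (|x| ^ (-p)) ≤ ENNReal.ofReal (L / (1 - p)) := by
  have hL0 : (0:ℝ) ≤ L := by linarith
  have hint : IntegrableOn (fun x : ℝ => x ^ (-p)) (Set.Ioo 0 L) volume := by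
    have := (intervalIntegral.intervalIntegrable_rpow' (r := -p) (by linarith)
      (a := 0) (b := L))
    rw [intervalIntegrable_iff] at this
    exact this.mono_set (by rw [Set.uIoc_of_le hL0]; exact Set.Ioo_subset_Ioc_self)
  have hcong : ∫⁻ x in Set.Ioo (0:ℝ) L, ENNReal.ofReal (|x| ^ (-p))
      = ∫⁻ x in Set.Ioo (0:ℝ) L, ENNReal.ofReal (x ^ (-p)) := by
    refine setLIntegral_congr_fun measurableSet_Ioo ?_
    intro x hx
    dsimp only
    rw [abs_of_pos hx.1]
  rw [hcong, ← ofReal_integral_eq_lintegral_ofReal hint ?_]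
  · apply ENNReal.ofReal_le_ofReal
    have : ∫ x in Set.Ioo (0:ℝ) L, x ^ (-p) = ∫ x in (0:ℝ)..L, x ^ (-p) := by
      rw [intervalIntegral.integral_of_le hL0, integral_Ioc_eq_integral_Ioo]
    rw [this, integral_rpow (Or.inl (by linarith))]
    rw [Real.zero_rpow (by linarith)]
    have h1 : L ^ (-p + 1) ≤ L := by
      calc L ^ (-p+1) ≤ L ^ (1:ℝ) :=
        Real.rpow_le_rpow_of_exponent_le hL (by linarith)
      _ = L := Real.rpow_one L
    have hd : 0 < -p + 1 := by linarith
    rw [div_le_div_iff₀ hd (by linarith : (0:ℝ) < 1 - p)]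
    have hLnn : 0 ≤ L ^ (-p+1) := Real.rpow_nonneg hL0 _
    nlinarith
  · filter_upwards [ae_restrict_mem measurableSet_Ioo] with x hx
    exact Real.rpow_nonneg hx.1.le _

lemma dcpl_helper1 {p L : ℝ} (c : ℝ) (hp0 : 0 < p) (hp1 : p < 1) (hL : 1 ≤ L) :
    ∫⁻ x in Set.Ioo (c - L) (c + L), ENNReal.ofReal (|x - c| ^ (-p))
      ≤ ENNReal.ofReal (2 * L / (1 - p)) := by
  have hL0 : (0:ℝ) < L := by linarith
  have hsplit : Set.Ioo (c - L) (c + L) ⊆ (Set.Ioo (c - L) c ∪ Set.Ico c (c + L)) := by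
    intro x hx
    rcases lt_or_ge x c with h | h
    · exact Or.inl ⟨hx.1, h⟩
    · exact Or.inr ⟨h, hx.2⟩
  calc ∫⁻ x in Set.Ioo (c - L) (c + L), ENNReal.ofReal (|x - c| ^ (-p))
      ≤ ∫⁻ x in (Set.Ioo (c - L) c ∪ Set.Ico c (c + L)), ENNReal.ofReal (|x - c| ^ (-p)) :=
        lintegral_mono_set hsplit
    _ ≤ (∫⁻ x in Set.Ioo (c - L) c, ENNReal.ofReal (|x - c| ^ (-p)))
        + ∫⁻ x in Set.Ico c (c + L), ENNReal.ofReal (|x - c| ^ (-p)) :=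
        lintegral_union_le _ _ _
    _ ≤ ENNReal.ofReal (L / (1 - p)) + ENNReal.ofReal (L / (1 - p)) := by
        gcongr
        · -- reflection x ↦ c - x
          have hmp : MeasurePreserving (fun x : ℝ => c - x) volume volume :=
            Measure.measurePreserving_sub_left volume c
          have hemb : MeasurableEmbedding (fun x : ℝ => c - x) :=
            (MeasurableEquiv.subLeft c).measurableEmbedding
          have hpre : (fun x : ℝ => c - x) ⁻¹' (Set.Ioo (c - L) c) = Set.Ioo 0 L := by
            ext x; simp only [Set.mem_preimage, Set.mem_Ioo]; constructor <;> intro h <;>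
              constructor <;> linarith [h.1, h.2]
          have := hmp.setLIntegral_comp_preimage_emb hemb
            (fun y => ENNReal.ofReal (|y - c| ^ (-p))) (Set.Ioo (c - L) c)
          rw [hpre] at this
          rw [← this]
          have : ∫⁻ x in Set.Ioo (0:ℝ) L, ENNReal.ofReal (|c - x - c| ^ (-p))
              = ∫⁻ x in Set.Ioo (0:ℝ) L, ENNReal.ofReal (|x| ^ (-p)) := by
            apply lintegral_congr; intro x; congr 1; rw [show c - x - c = -x by ring, abs_neg]
          rw [this]; exact dcpl_helper0 hp0 hp1 hL
        · -- translation x ↦ x + c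
          rw [← setLIntegral_congr (Ioo_ae_eq_Ico (μ := (volume : Measure ℝ)) (a := c)
            (b := c + L))]
          have hmp : MeasurePreserving (fun x : ℝ => x + c) volume volume :=
            measurePreserving_add_right volume c
          have hemb : MeasurableEmbedding (fun x : ℝ => x + c) :=
            (MeasurableEquiv.addRight c).measurableEmbedding
          have hpre : (fun x : ℝ => x + c) ⁻¹' (Set.Ioo c (c + L)) = Set.Ioo 0 L := by
            ext x; simp only [Set.mem_preimage, Set.mem_Ioo]; constructor <;> intro h <;>
              constructor <;> linarith [h.1, h.2]
          have := hmp.setLIntegral_comp_preimage_emb hemb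
            (fun y => ENNReal.ofReal (|y - c| ^ (-p))) (Set.Ioo c (c + L))
          rw [hpre] at this
          rw [← this]
          have : ∫⁻ x in Set.Ioo (0:ℝ) L, ENNReal.ofReal (|x + c - c| ^ (-p))
              = ∫⁻ x in Set.Ioo (0:ℝ) L, ENNReal.ofReal (|x| ^ (-p)) := by
            apply lintegral_congr; intro x; congr 2; ring
          rw [this]; exact dcpl_helper0 hp0 hp1 hL
    _ = ENNReal.ofReal (2 * L / (1 - p)) := by
        rw [← ENNReal.ofReal_add (div_nonneg (by linarith) (by linarith))
          (div_nonneg (by linarith) (by linarith))]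
        ring_nf

lemma dcpl_helper2 {p L : ℝ} (w : ℂ) (hp0 : 0 < p) (hp1 : p < 1) (hL : 1 ≤ L) :
    ∫⁻ x in Set.Ioo (w.re - L) (w.re + L), (‖(x:ℂ) - w‖₊ : ℝ≥0∞) ^ (-p) ∂volume
      ≤ ENNReal.ofReal (2 * L / (1 - p)) := by
  set c := w.re
  have hae : ∀ᵐ x : ℝ ∂volume, x ≠ c := by
    refine ae_iff.mpr ?_
    simpa using measure_singleton (μ := (volume : Measure ℝ)) c
  refine le_trans (setLIntegral_mono_ae' measurableSet_Ioo ?_) (dcpl_helper1 c hp0 hp1 hL)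
  filter_upwards [hae] with x hx _
  have hr : (0:ℝ) < |x - c| := abs_pos.mpr (sub_ne_zero.mpr hx)
  have hle : |x - c| ≤ ‖(x:ℂ) - w‖ := by
    have := dcpl_re_le_norm ((x:ℂ) - w)
    simpa [Complex.sub_re, Complex.ofReal_re] using this
  exact dcpl_up_npow hp0.le hr hle

end DecouplingAux

set_option maxHeartbeats 2000000 in
/-- **Decoupling lemma.** If `μ` is a probability measure on `ℝ` with a bounded density
and compact support, then for every `s ∈ (0, 1/2)` there is a constant `D_s < ∞` such
that for all `α, β, γ ∈ ℂ`:
`∫ |x-α|^{-s} |x-γ|^s |x-β|^{-s} dμ(x)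
  ≤ D_s (∫ |x-γ|^s |x-β|^{-s} dμ(x)) (∫ |x-α|^{-s} dμ(x))`. -/
theorem decoupling_lemma
    (μ : Measure ℝ) (hprob : IsProbabilityMeasure μ)
    (ρ : ℝ → ℝ) (B : ℝ) (hρ0 : ∀ x, 0 ≤ ρ x) (hρB : ∀ x, ρ x ≤ B)
    (hμρ : μ = volume.withDensity (fun x => ENNReal.ofReal (ρ x)))
    (hK : ∃ K : Set ℝ, IsCompact K ∧ μ Kᶜ = 0)
    (s : ℝ) (hs : s ∈ Set.Ioo (0:ℝ) (1/2)) :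
    ∃ Ds : ℝ, ∀ α β γ : ℂ,
      ∫⁻ x, (‖(x:ℂ) - α‖₊ : ℝ≥0∞) ^ (-s) * (‖(x:ℂ) - γ‖₊ : ℝ≥0∞) ^ s *
          (‖(x:ℂ) - β‖₊ : ℝ≥0∞) ^ (-s) ∂μ ≤
        ENNReal.ofReal Ds *
          (∫⁻ x, (‖(x:ℂ) - γ‖₊ : ℝ≥0∞) ^ s * (‖(x:ℂ) - β‖₊ : ℝ≥0∞) ^ (-s) ∂μ) *
          (∫⁻ x, (‖(x:ℂ) - α‖₊ : ℝ≥0∞) ^ (-s) ∂μ) := by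
  obtain ⟨K, hKc, hKn⟩ := hK
  obtain ⟨r, hr⟩ := hKc.isBounded.subset_closedBall 0
  set R : ℝ := max r 1 with hRdef
  have hR1 : (1:ℝ) ≤ R := le_max_right r 1
  have hR0 : (0:ℝ) < R := by linarith
  have hKR : ∀ x ∈ K, |x| ≤ R := by
    intro x hx
    have := hr hx
    rw [Metric.mem_closedBall, Real.dist_eq, sub_zero] at this
    exact this.trans (le_max_left r 1)
  have hB0 : (0:ℝ) ≤ B := le_trans (hρ0 0) (hρB 0)
  have hs0 : 0 < s := hs.1
  have hs2 : 2*s < 1 := by have := hs.2; linarith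
  have hs1 : s < 1 := by linarith
  set l : ℝ := 1/(4*(B+1)) with hldef
  have hl0 : 0 < l := by positivity
  set c₁ : ℝ := min (l/(4*R+2)) (1/4) with hc₁def
  have hc₁0 : 0 < c₁ := lt_min (by positivity) (by norm_num)
  have hc₁4 : c₁ ≤ 1/4 := min_le_right _ _
  have hc₁l : c₁ * (4*R+2) ≤ l := by
    have h := min_le_left (l/(4*R+2)) (1/4)
    rw [le_div_iff₀ (by linarith)] at h
    exact h
  set C5 : ℝ := (2/c₁)^s * (32*B/(1-2*s)) * ((6*(2*R+1))^s) with hC5def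
  set C6 : ℝ := (2/c₁)^s * ((10/3:ℝ)^s) * ((2*R+1)^s) * (4*B/(1-s)) with hC6def
  have hC50 : 0 ≤ C5 := by
    apply mul_nonneg (mul_nonneg (Real.rpow_nonneg (by positivity) s) ?_)
      (Real.rpow_nonneg (by positivity) s)
    apply div_nonneg (by linarith) (by linarith)
  have hC60 : 0 ≤ C6 := by
    apply mul_nonneg (mul_nonneg (mul_nonneg (Real.rpow_nonneg (by positivity) s)
      (Real.rpow_nonneg (by norm_num) s)) (Real.rpow_nonneg (by positivity) s))
    apply div_nonneg (by linarith) (by linarith)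
  set Cn : ℝ := max C5 C6 with hCndef
  have hCn0 : 0 ≤ Cn := le_trans hC50 (le_max_left _ _)
  refine ⟨Cn * (2*R+1)^s + (2*R+1)^s, fun α β γ => ?_⟩
  -- abbreviations
  set F : ℝ → ℝ≥0∞ := fun x => (‖(x:ℂ) - α‖₊ : ℝ≥0∞) ^ (-s) with hFdef
  set G : ℝ → ℝ≥0∞ := fun x =>
    (‖(x:ℂ) - γ‖₊ : ℝ≥0∞) ^ s * (‖(x:ℂ) - β‖₊ : ℝ≥0∞) ^ (-s) with hGdef
  have hFm : Measurable F := dcpl_meas α (-s)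
  have hGm : Measurable G := (dcpl_meas γ s).mul (dcpl_meas β (-s))
  have hmuB : μ ≤ ENNReal.ofReal B • volume := by
    refine Measure.le_iff.2 (fun A hA => ?_)
    rw [hμρ, withDensity_apply _ hA]
    calc ∫⁻ x in A, ENNReal.ofReal (ρ x) ∂volume
        ≤ ∫⁻ _ in A, ENNReal.ofReal B ∂volume :=
          lintegral_mono (fun x => ENNReal.ofReal_le_ofReal (hρB x))
      _ = ENNReal.ofReal B * volume A := setLIntegral_const A _
      _ = (ENNReal.ofReal B • volume) A := by rw [Measure.smul_apply, smul_eq_mul]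
  have hKae : ∀ᵐ x ∂μ, x ∈ K := by
    refine ae_iff.mpr ?_
    exact hKn
  have hμK : μ K = 1 := by
    have h1 : (1:ℝ≥0∞) ≤ μ K := by
      have : μ Set.univ ≤ μ K + μ Kᶜ := by
        rw [← Set.union_compl_self K]; exact measure_union_le _ _
      rw [measure_univ, hKn, add_zero] at this
      exact this
    exact le_antisymm prob_le_one h1
  have hdist : ∀ x ∈ K, ∀ y ∈ K, ‖(y:ℂ) - (x:ℂ)‖ ≤ 2*R := by
    intro x hx y hy
    have h1 : ((y:ℂ) - (x:ℂ)) = ((y - x : ℝ) : ℂ) := by push_cast; ring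
    rw [h1, Complex.norm_real]
    calc |y - x| ≤ |y| + |x| := abs_sub y x
      _ ≤ 2*R := by linarith [hKR x hx, hKR y hy]
  have keyF : ∀ (w : ℂ) (t : ℝ), 0 < t → (∀ y ∈ K, ‖(y:ℂ) - w‖ ≤ t) →
      ENNReal.ofReal (t ^ (-s)) ≤ ∫⁻ x, (‖(x:ℂ) - w‖₊ : ℝ≥0∞) ^ (-s) ∂μ := by
    intro w t ht0 hw
    calc ENNReal.ofReal (t ^ (-s)) = ENNReal.ofReal (t ^ (-s)) * μ K := by
          rw [hμK, mul_one]
      _ = ∫⁻ _ in K, ENNReal.ofReal (t ^ (-s)) ∂μ := (setLIntegral_const K _).symm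
      _ ≤ ∫⁻ x in K, (‖(x:ℂ) - w‖₊ : ℝ≥0∞) ^ (-s) ∂μ :=
          setLIntegral_mono (dcpl_meas w (-s)) (fun y hy => dcpl_lo_npow hs0.le ht0 (hw y hy))
      _ ≤ _ := setLIntegral_le_lintegral _ _
  set N : Set ℝ := {x | ‖(x:ℂ) - α‖ < 1} with hNdef
  have hNmeas : MeasurableSet N := by
    have : N = (fun x : ℝ => ‖(x:ℂ) - α‖) ⁻¹' (Set.Iio 1) := rfl
    rw [this]
    exact ((Complex.continuous_ofReal.sub continuous_const).norm).measurable measurableSet_Iio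
  -- far bound
  have hfar : ∫⁻ x in Nᶜ, F x * (‖(x:ℂ) - γ‖₊ : ℝ≥0∞) ^ s * (‖(x:ℂ) - β‖₊ : ℝ≥0∞) ^ (-s) ∂μ
      ≤ (ENNReal.ofReal ((2*R+1)^s) * ∫⁻ x, F x ∂μ) * ∫⁻ x, G x ∂μ := by
    have hpt : ∀ᵐ x ∂(μ.restrict Nᶜ),
        F x * (‖(x:ℂ) - γ‖₊ : ℝ≥0∞) ^ s * (‖(x:ℂ) - β‖₊ : ℝ≥0∞) ^ (-s)
          ≤ (ENNReal.ofReal ((2*R+1)^s) * ∫⁻ y, F y ∂μ) * G x := by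
      filter_upwards [ae_restrict_of_ae hKae, ae_restrict_mem hNmeas.compl] with x hxK hxN
      have h1 : 1 ≤ ‖(x:ℂ) - α‖ := not_lt.1 hxN
      have hXpos : (0:ℝ) < ‖(x:ℂ) - α‖ := by linarith
      have hlow : ENNReal.ofReal (((2*R+1) * ‖(x:ℂ) - α‖) ^ (-s)) ≤ ∫⁻ y, F y ∂μ := by
        refine keyF α _ (by positivity) (fun y hy => ?_)
        have htr : (y:ℂ) - α = ((y:ℂ) - (x:ℂ)) + ((x:ℂ) - α) := by ring
        calc ‖(y:ℂ) - α‖ ≤ ‖(y:ℂ) - (x:ℂ)‖ + ‖(x:ℂ) - α‖ := by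
              rw [htr]; exact norm_add_le _ _
          _ ≤ 2*R + ‖(x:ℂ) - α‖ := by linarith [hdist x hxK y hy]
          _ ≤ (2*R+1) * ‖(x:ℂ) - α‖ := by nlinarith
      have hf1 : F x ≤ ENNReal.ofReal ((2*R+1)^s) * ∫⁻ y, F y ∂μ := by
        have he : F x = ENNReal.ofReal (‖(x:ℂ) - α‖ ^ (-s)) := by
          rw [hFdef]; dsimp only; rw [dcpl_nnE, ← ENNReal.ofReal_rpow_of_pos hXpos]
        have hre : ‖(x:ℂ) - α‖ ^ (-s) = (2*R+1)^s * (((2*R+1) * ‖(x:ℂ) - α‖) ^ (-s)) := by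
          rw [Real.mul_rpow (by linarith) hXpos.le, ← mul_assoc,
            ← Real.rpow_add (by linarith : (0:ℝ) < 2*R+1),
            show s + -s = 0 by ring, Real.rpow_zero, one_mul]
        rw [he, hre, ENNReal.ofReal_mul (Real.rpow_nonneg (by linarith) s)]
        exact mul_le_mul_right hlow _
      calc F x * (‖(x:ℂ) - γ‖₊ : ℝ≥0∞) ^ s * (‖(x:ℂ) - β‖₊ : ℝ≥0∞) ^ (-s)
          = F x * G x := by rw [hGdef]; dsimp only; rw [mul_assoc]
        _ ≤ (ENNReal.ofReal ((2*R+1)^s) * ∫⁻ y, F y ∂μ) * G x := mul_le_mul_left hf1 _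
    calc ∫⁻ x in Nᶜ, F x * (‖(x:ℂ) - γ‖₊ : ℝ≥0∞) ^ s * (‖(x:ℂ) - β‖₊ : ℝ≥0∞) ^ (-s) ∂μ
        ≤ ∫⁻ x in Nᶜ, (ENNReal.ofReal ((2*R+1)^s) * ∫⁻ y, F y ∂μ) * G x ∂μ :=
          lintegral_mono_ae hpt
      _ = (ENNReal.ofReal ((2*R+1)^s) * ∫⁻ y, F y ∂μ) * ∫⁻ x in Nᶜ, G x ∂μ :=
          lintegral_const_mul _ hGm
      _ ≤ (ENNReal.ofReal ((2*R+1)^s) * ∫⁻ y, F y ∂μ) * ∫⁻ x, G x ∂μ :=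
          mul_le_mul_right (setLIntegral_le_lintegral _ _) _
  -- near bound
  have hnearTot : ∫⁻ x in N, (‖(x:ℂ) - α‖₊ : ℝ≥0∞) ^ (-s) * (‖(x:ℂ) - γ‖₊ : ℝ≥0∞) ^ s *
        (‖(x:ℂ) - β‖₊ : ℝ≥0∞) ^ (-s) ∂μ
      ≤ ENNReal.ofReal Cn * ((ENNReal.ofReal ((2*R+1)^s) * ∫⁻ x, F x ∂μ) * ∫⁻ x, G x ∂μ) := by
    rcases eq_or_ne (μ N) 0 with hN0 | hN0
    · rw [setLIntegral_measure_zero N _ hN0]; exact zero_le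
    · -- pick a point of K near α
      have hNK : (N ∩ K).Nonempty := by
        rw [Set.nonempty_iff_ne_empty]
        intro hemp
        apply hN0
        have : μ N ≤ μ (N ∩ K) + μ Kᶜ := by
          refine le_trans (measure_mono ?_) (measure_union_le _ _)
          intro x hx
          by_cases hxK : x ∈ K
          · exact Or.inl ⟨hx, hxK⟩
          · exact Or.inr hxK
        rw [hemp, hKn] at this
        simpa using this
      obtain ⟨x₀, hx₀N, hx₀K⟩ := hNK
      have hx₀α : ‖(x₀:ℂ) - α‖ < 1 := hx₀N
      set pβ : ℝ := ‖(x₀:ℂ) - β‖ with hpβdef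
      set pγ : ℝ := ‖(x₀:ℂ) - γ‖ with hpγdef
      have hpβ0 : 0 ≤ pβ := norm_nonneg _
      have hpγ0 : 0 ≤ pγ := norm_nonneg _
      -- lower bound for ∫F
      have hIntFlow : ENNReal.ofReal ((2*R+1) ^ (-s)) ≤ ∫⁻ x, F x ∂μ := by
        refine keyF α (2*R+1) (by linarith) (fun y hy => ?_)
        have htr : (y:ℂ) - α = ((y:ℂ) - (x₀:ℂ)) + ((x₀:ℂ) - α) := by ring
        calc ‖(y:ℂ) - α‖ ≤ ‖(y:ℂ) - (x₀:ℂ)‖ + ‖(x₀:ℂ) - α‖ := by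
              rw [htr]; exact norm_add_le _ _
          _ ≤ 2*R + 1 := by linarith [hdist x₀ hx₀K y hy]
      have hone : (1:ℝ≥0∞) ≤ ENNReal.ofReal ((2*R+1)^s) * ∫⁻ x, F x ∂μ := by
        calc (1:ℝ≥0∞) = ENNReal.ofReal ((2*R+1)^s * (2*R+1)^(-s)) := by
              rw [← Real.rpow_add (by linarith : (0:ℝ) < 2*R+1),
                show s + -s = 0 by ring, Real.rpow_zero, ENNReal.ofReal_one]
          _ = ENNReal.ofReal ((2*R+1)^s) * ENNReal.ofReal ((2*R+1)^(-s)) :=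
              ENNReal.ofReal_mul (Real.rpow_nonneg (by linarith) s)
          _ ≤ _ := mul_le_mul_right hIntFlow _
      -- lower bound for ∫G
      set Q : ℝ := (c₁*(1+pγ))^s * ((2*R+1)*(1+pβ))^(-s) with hQdef
      have hQ0 : 0 ≤ Q := mul_nonneg (Real.rpow_nonneg (by positivity) s)
        (Real.rpow_nonneg (by positivity) _)
      have hGlow : ENNReal.ofReal ((1/2) * Q) ≤ ∫⁻ x, G x ∂μ := by
        set g : ℝ := γ.re with hgdef
        set T : Set ℝ := Set.Icc (g-l) (g+l) with hTdef
        set S : Set ℝ := K \ T with hSdef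
        have hμT : μ T ≤ ENNReal.ofReal (1/2) := by
          have h2l : B * (2*l) ≤ 1/2 := by
            rw [hldef]
            rw [show B * (2 * (1/(4*(B+1)))) = B / (2*(B+1)) by field_simp; ring]
            rw [div_le_iff₀ (by linarith)]
            linarith
          calc μ T ≤ (ENNReal.ofReal B • volume) T := Measure.le_iff'.1 hmuB T
            _ = ENNReal.ofReal B * volume T := by rw [Measure.smul_apply, smul_eq_mul]
            _ = ENNReal.ofReal B * ENNReal.ofReal (2*l) := by
                rw [hTdef, Real.volume_Icc, show g + l - (g - l) = 2*l by ring]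
            _ = ENNReal.ofReal (B * (2*l)) := (ENNReal.ofReal_mul hB0).symm
            _ ≤ ENNReal.ofReal (1/2) := ENNReal.ofReal_le_ofReal h2l
        have hμS : ENNReal.ofReal (1/2) ≤ μ S := by
          have hcover : K ⊆ S ∪ T := by
            intro x hx
            by_cases hxT : x ∈ T
            · exact Or.inr hxT
            · exact Or.inl ⟨hx, hxT⟩
          have h1 : (1:ℝ≥0∞) ≤ μ S + ENNReal.ofReal (1/2) := by
            calc (1:ℝ≥0∞) = μ K := hμK.symm
              _ ≤ μ (S ∪ T) := measure_mono hcover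
              _ ≤ μ S + μ T := measure_union_le _ _
              _ ≤ μ S + ENNReal.ofReal (1/2) := add_le_add_right hμT _
          have h2 : (1:ℝ≥0∞) - ENNReal.ofReal (1/2) = ENNReal.ofReal (1/2) := by
            rw [← ENNReal.ofReal_one, ← ENNReal.ofReal_sub _ (by norm_num : (0:ℝ) ≤ 1/2)]
            norm_num
          calc ENNReal.ofReal (1/2) = 1 - ENNReal.ofReal (1/2) := h2.symm
            _ ≤ μ S := tsub_le_iff_right.mpr h1
        have hGpt : ∀ x ∈ S, ENNReal.ofReal Q ≤ G x := by
          intro x hxS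
          obtain ⟨hxK, hxT⟩ := hxS
          have hxg : l ≤ |x - g| := by
            have hxT' : x < g - l ∨ g + l < x := by
              have h := hxT
              rw [hTdef, Set.mem_Icc, not_and_or, not_le, not_le] at h
              exact h
            rcases hxT' with h | h
            · exact le_abs.2 (Or.inr (by linarith))
            · exact le_abs.2 (Or.inl (by linarith))
          have hnγ1 : l ≤ ‖(x:ℂ) - γ‖ := by
            refine le_trans hxg ?_
            have := dcpl_re_le_norm ((x:ℂ) - γ)
            simpa [Complex.sub_re, Complex.ofReal_re, hgdef] using this
          have hnγ2 : pγ - 2*R ≤ ‖(x:ℂ) - γ‖ := by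
            have htr : (x₀:ℂ) - γ = ((x₀:ℂ) - (x:ℂ)) + ((x:ℂ) - γ) := by ring
            have h1 : pγ ≤ ‖(x₀:ℂ) - (x:ℂ)‖ + ‖(x:ℂ) - γ‖ := by
              rw [hpγdef, htr]; exact norm_add_le _ _
            have h2 := hdist x hxK x₀ hx₀K
            linarith
          have hγ : c₁*(1+pγ) ≤ ‖(x:ℂ) - γ‖ := by
            rcases le_or_gt pγ (4*R+1) with h | h
            · calc c₁*(1+pγ) ≤ c₁*(4*R+2) := by nlinarith
                _ ≤ l := hc₁l
                _ ≤ _ := hnγ1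
            · calc c₁*(1+pγ) ≤ (1/4)*(1+pγ) := by nlinarith
                _ ≤ pγ - 2*R := by nlinarith
                _ ≤ _ := hnγ2
          have hβ : ‖(x:ℂ) - β‖ ≤ (2*R+1)*(1+pβ) := by
            have htr : (x:ℂ) - β = ((x:ℂ) - (x₀:ℂ)) + ((x₀:ℂ) - β) := by ring
            have h1 : ‖(x:ℂ) - β‖ ≤ ‖(x:ℂ) - (x₀:ℂ)‖ + pβ := by
              rw [htr, hpβdef]; exact norm_add_le _ _
            have h2 := hdist x₀ hx₀K x hxK
            nlinarith
          calc ENNReal.ofReal Q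
              = ENNReal.ofReal ((c₁*(1+pγ))^s) * ENNReal.ofReal (((2*R+1)*(1+pβ))^(-s)) := by
                rw [hQdef, ENNReal.ofReal_mul (Real.rpow_nonneg (by positivity) s)]
            _ ≤ (‖(x:ℂ) - γ‖₊ : ℝ≥0∞) ^ s * (‖(x:ℂ) - β‖₊ : ℝ≥0∞) ^ (-s) :=
                mul_le_mul' (dcpl_lo_pow hs0.le (by positivity) hγ)
                  (dcpl_lo_npow hs0.le (by positivity) hβ)
            _ = G x := rfl
        calc ENNReal.ofReal ((1/2) * Q) = ENNReal.ofReal Q * ENNReal.ofReal (1/2) := by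
              rw [← ENNReal.ofReal_mul hQ0, mul_comm]
          _ ≤ ENNReal.ofReal Q * μ S := mul_le_mul_right hμS _
          _ = ∫⁻ _ in S, ENNReal.ofReal Q ∂μ := (setLIntegral_const S _).symm
          _ ≤ ∫⁻ x in S, G x ∂μ := setLIntegral_mono hGm hGpt
          _ ≤ ∫⁻ x, G x ∂μ := setLIntegral_le_lintegral _ _
      -- geometry of the near region
      have hNsub : N ⊆ Set.Ioo (α.re - 1) (α.re + 1) := by
        intro x hx
        have h1 : |x - α.re| ≤ ‖(x:ℂ) - α‖ := by
          have := dcpl_re_le_norm ((x:ℂ) - α)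
          simpa [Complex.sub_re, Complex.ofReal_re] using this
        have h2 : |x - α.re| < 1 := lt_of_le_of_lt h1 hx
        rw [abs_lt] at h2
        exact ⟨by linarith [h2.1], by linarith [h2.2]⟩
      have hxx₀ : ∀ x ∈ N, ‖(x:ℂ) - (x₀:ℂ)‖ < 2 := by
        intro x hx
        have h1 : |x - α.re| < 1 := by
          have := dcpl_re_le_norm ((x:ℂ) - α)
          have h2 : |x - α.re| ≤ ‖(x:ℂ) - α‖ := by
            simpa [Complex.sub_re, Complex.ofReal_re] using this
          exact lt_of_le_of_lt h2 hx
        have h3 : |α.re - x₀| < 1 := by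
          have h4 : |α.re - x₀| ≤ ‖α - (x₀:ℂ)‖ := by
            have := dcpl_re_le_norm (α - (x₀:ℂ))
            simpa [Complex.sub_re, Complex.ofReal_re] using this
          have h5 : ‖α - (x₀:ℂ)‖ = ‖(x₀:ℂ) - α‖ := norm_sub_rev _ _
          rw [h5] at h4
          exact lt_of_le_of_lt h4 hx₀α
        have h6 : ((x:ℂ) - (x₀:ℂ)) = ((x - x₀ : ℝ) : ℂ) := by push_cast; ring
        rw [h6, Complex.norm_real]
        calc |x - x₀| ≤ |x - α.re| + |α.re - x₀| := abs_sub_le _ _ _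
          _ < 2 := by linarith
      have hrest : ∀ (w : ℂ) (p L : ℝ), 0 < p → p < 1 → 1 ≤ L →
          N ⊆ Set.Ioo (w.re - L) (w.re + L) →
          ∫⁻ x in N, (‖(x:ℂ) - w‖₊ : ℝ≥0∞) ^ (-p) ∂μ
            ≤ ENNReal.ofReal B * ENNReal.ofReal (2*L/(1-p)) := by
        intro w p L hp0 hp1 hL hsub
        calc ∫⁻ x in N, (‖(x:ℂ) - w‖₊ : ℝ≥0∞) ^ (-p) ∂μ
            ≤ ∫⁻ x in Set.Ioo (w.re - L) (w.re + L), (‖(x:ℂ) - w‖₊ : ℝ≥0∞) ^ (-p) ∂μ :=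
              lintegral_mono_set hsub
          _ ≤ ∫⁻ x in Set.Ioo (w.re - L) (w.re + L), (‖(x:ℂ) - w‖₊ : ℝ≥0∞) ^ (-p)
                ∂(ENNReal.ofReal B • volume) :=
              lintegral_mono' (Measure.restrict_mono (subset_refl _) hmuB) le_rfl
          _ = ENNReal.ofReal B * ∫⁻ x in Set.Ioo (w.re - L) (w.re + L),
                (‖(x:ℂ) - w‖₊ : ℝ≥0∞) ^ (-p) ∂volume := by
              rw [Measure.restrict_smul, lintegral_smul_measure, smul_eq_mul]
          _ ≤ ENNReal.ofReal B * ENNReal.ofReal (2*L/(1-p)) :=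
              mul_le_mul_right (dcpl_helper2 w hp0 hp1 hL) _
      have hf3 : ∀ x ∈ N, (‖(x:ℂ) - γ‖₊ : ℝ≥0∞) ^ s ≤ ENNReal.ofReal ((2*(1+pγ))^s) := by
        intro x hx
        refine dcpl_up_pow hs0.le (by positivity) ?_
        have htr : (x:ℂ) - γ = ((x:ℂ) - (x₀:ℂ)) + ((x₀:ℂ) - γ) := by ring
        calc ‖(x:ℂ) - γ‖ ≤ ‖(x:ℂ) - (x₀:ℂ)‖ + pγ := by
              rw [htr, hpγdef]; exact norm_add_le _ _
          _ ≤ 2*(1+pγ) := by linarith [(hxx₀ x hx).le]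
      have hQ10 : (0:ℝ) ≤ (2*(1+pγ))^s := Real.rpow_nonneg (by positivity) s
      have hGfin : (∫⁻ x, G x ∂μ) ≤ (ENNReal.ofReal ((2*R+1)^s) * ∫⁻ x, F x ∂μ)
          * ∫⁻ x, G x ∂μ := by
        calc (∫⁻ x, G x ∂μ) = 1 * ∫⁻ x, G x ∂μ := (one_mul _).symm
          _ ≤ _ := mul_le_mul_left hone _
      rcases le_or_gt pβ 5 with hpb | hpb
      · -- β close to the support
        have hNIβ : N ⊆ Set.Ioo (β.re - 7) (β.re + 7) := by
          intro x hx
          have h1 : |x₀ - β.re| ≤ pβ := by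
            have := dcpl_re_le_norm ((x₀:ℂ) - β)
            simpa [Complex.sub_re, Complex.ofReal_re, hpβdef] using this
          have h2 : |x - x₀| < 2 := by
            have h6 : ((x:ℂ) - (x₀:ℂ)) = ((x - x₀ : ℝ) : ℂ) := by push_cast; ring
            have := hxx₀ x hx
            rw [h6, Complex.norm_real] at this
            exact this
          have h3 : |x - β.re| < 7 := by
            calc |x - β.re| ≤ |x - x₀| + |x₀ - β.re| := abs_sub_le _ _ _
              _ < 7 := by linarith
          rw [abs_lt] at h3
          exact ⟨by linarith [h3.1], by linarith [h3.2]⟩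
        have hpt : ∀ x ∈ N, (‖(x:ℂ) - α‖₊ : ℝ≥0∞) ^ (-s) * (‖(x:ℂ) - γ‖₊ : ℝ≥0∞) ^ s *
              (‖(x:ℂ) - β‖₊ : ℝ≥0∞) ^ (-s)
            ≤ ENNReal.ofReal ((2*(1+pγ))^s) * ((‖(x:ℂ) - α‖₊ : ℝ≥0∞) ^ (-(2*s))
              + (‖(x:ℂ) - β‖₊ : ℝ≥0∞) ^ (-(2*s))) := by
          intro x hx
          have hre : (‖(x:ℂ) - α‖₊ : ℝ≥0∞) ^ (-s) * (‖(x:ℂ) - γ‖₊ : ℝ≥0∞) ^ s *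
              (‖(x:ℂ) - β‖₊ : ℝ≥0∞) ^ (-s) = (‖(x:ℂ) - γ‖₊ : ℝ≥0∞) ^ s *
              ((‖(x:ℂ) - α‖₊ : ℝ≥0∞) ^ (-s) * (‖(x:ℂ) - β‖₊ : ℝ≥0∞) ^ (-s)) := by ring
          rw [hre]
          exact mul_le_mul' (hf3 x hx) (dcpl_sq_trick hs0 _ _)
        have hint : ∫⁻ x in N, (‖(x:ℂ) - α‖₊ : ℝ≥0∞) ^ (-s) * (‖(x:ℂ) - γ‖₊ : ℝ≥0∞) ^ s *
              (‖(x:ℂ) - β‖₊ : ℝ≥0∞) ^ (-s) ∂μ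
            ≤ ENNReal.ofReal ((2*(1+pγ))^s) * (ENNReal.ofReal B * ENNReal.ofReal (2*1/(1-2*s))
              + ENNReal.ofReal B * ENNReal.ofReal (2*7/(1-2*s))) := by
          calc ∫⁻ x in N, (‖(x:ℂ) - α‖₊ : ℝ≥0∞) ^ (-s) * (‖(x:ℂ) - γ‖₊ : ℝ≥0∞) ^ s *
                (‖(x:ℂ) - β‖₊ : ℝ≥0∞) ^ (-s) ∂μ
              ≤ ∫⁻ x in N, ENNReal.ofReal ((2*(1+pγ))^s) * ((‖(x:ℂ) - α‖₊ : ℝ≥0∞) ^ (-(2*s))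
                + (‖(x:ℂ) - β‖₊ : ℝ≥0∞) ^ (-(2*s))) ∂μ :=
                setLIntegral_mono (measurable_const.mul
                  ((dcpl_meas α (-(2*s))).add (dcpl_meas β (-(2*s))))) hpt
            _ = ENNReal.ofReal ((2*(1+pγ))^s) * (∫⁻ x in N, (‖(x:ℂ) - α‖₊ : ℝ≥0∞) ^ (-(2*s)) ∂μ
                + ∫⁻ x in N, (‖(x:ℂ) - β‖₊ : ℝ≥0∞) ^ (-(2*s)) ∂μ) := by
                rw [lintegral_const_mul _ (f := fun x : ℝ => (‖(x:ℂ) - α‖₊ : ℝ≥0∞) ^ (-(2*s)) +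
                    (‖(x:ℂ) - β‖₊ : ℝ≥0∞) ^ (-(2*s))) ((dcpl_meas α (-(2*s))).add (dcpl_meas β (-(2*s)))),
                  lintegral_add_left (dcpl_meas α (-(2*s)))]
            _ ≤ _ := by
                refine mul_le_mul_right (add_le_add ?_ ?_) _
                · exact hrest α (2*s) 1 (by linarith) (by linarith) le_rfl
                    (by simpa using hNsub)
                · exact hrest β (2*s) 7 (by linarith) (by linarith) (by norm_num) hNIβ
        refine le_trans hint ?_
        have hcomb : ENNReal.ofReal ((2*(1+pγ))^s) * (ENNReal.ofReal B *
              ENNReal.ofReal (2*1/(1-2*s)) + ENNReal.ofReal B * ENNReal.ofReal (2*7/(1-2*s)))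
            = ENNReal.ofReal ((2*(1+pγ))^s * (B * (2*1/(1-2*s)) + B * (2*7/(1-2*s)))) := by
          rw [← ENNReal.ofReal_mul hB0, ← ENNReal.ofReal_mul hB0,
            ← ENNReal.ofReal_add (mul_nonneg hB0 (div_nonneg (by norm_num) (by linarith)))
              (mul_nonneg hB0 (div_nonneg (by norm_num) (by linarith))),
            ← ENNReal.ofReal_mul hQ10]
        rw [hcomb]
        have hreal : (2*(1+pγ))^s * (B * (2*1/(1-2*s)) + B * (2*7/(1-2*s)))
            ≤ Cn * ((1/2) * Q) := by
          have e2 : (6*(2*R+1))^s * (6*(2*R+1))^(-s) = 1 := by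
            rw [← Real.rpow_add (by linarith : (0:ℝ) < 6*(2*R+1)),
              show s + -s = 0 by ring, Real.rpow_zero]
          have e1 : (2/c₁)^s * (c₁*(1+pγ))^s = (2*(1+pγ))^s := by
            rw [← Real.mul_rpow (by positivity) (by positivity)]
            congr 1
            field_simp
          have hmono : (6*(2*R+1))^(-s) ≤ ((2*R+1)*(1+pβ))^(-s) :=
            Real.rpow_le_rpow_of_nonpos (by positivity) (by nlinarith) (by linarith)
          have hkey : C5 * ((1/2) * ((c₁*(1+pγ))^s * (6*(2*R+1))^(-s)))
              = (2*(1+pγ))^s * (B * (2*1/(1-2*s)) + B * (2*7/(1-2*s))) := by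
            rw [hC5def]
            rw [show (2/c₁)^s * (32*B/(1-2*s)) * ((6*(2*R+1))^s) *
                ((1/2) * ((c₁*(1+pγ))^s * (6*(2*R+1))^(-s)))
              = ((2/c₁)^s * (c₁*(1+pγ))^s) * ((6*(2*R+1))^s * (6*(2*R+1))^(-s))
                * (16*B/(1-2*s)) by ring]
            rw [e1, e2, mul_one]
            ring
          calc (2*(1+pγ))^s * (B * (2*1/(1-2*s)) + B * (2*7/(1-2*s)))
              = C5 * ((1/2) * ((c₁*(1+pγ))^s * (6*(2*R+1))^(-s))) := hkey.symm
            _ ≤ Cn * ((1/2) * ((c₁*(1+pγ))^s * ((2*R+1)*(1+pβ))^(-s))) := by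
                have h1 : (c₁*(1+pγ))^s * (6*(2*R+1))^(-s)
                    ≤ (c₁*(1+pγ))^s * ((2*R+1)*(1+pβ))^(-s) :=
                  mul_le_mul_of_nonneg_left hmono (Real.rpow_nonneg (by positivity) s)
                have h2 : (0:ℝ) ≤ (1/2) * ((c₁*(1+pγ))^s * (6*(2*R+1))^(-s)) := by
                  have := Real.rpow_nonneg (by positivity : (0:ℝ) ≤ 6*(2*R+1)) (-s)
                  have := Real.rpow_nonneg (by positivity : (0:ℝ) ≤ c₁*(1+pγ)) s
                  positivity
                apply mul_le_mul (le_max_left C5 C6) (by linarith) h2 hCn0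
            _ = Cn * ((1/2) * Q) := by rw [hQdef]
        calc ENNReal.ofReal ((2*(1+pγ))^s * (B * (2*1/(1-2*s)) + B * (2*7/(1-2*s))))
            ≤ ENNReal.ofReal (Cn * ((1/2) * Q)) := ENNReal.ofReal_le_ofReal hreal
          _ = ENNReal.ofReal Cn * ENNReal.ofReal ((1/2) * Q) := ENNReal.ofReal_mul hCn0
          _ ≤ ENNReal.ofReal Cn * ∫⁻ x, G x ∂μ := mul_le_mul_right hGlow _
          _ ≤ _ := mul_le_mul_right hGfin _
      · -- β far from the support
        have hf2 : ∀ x ∈ N, (‖(x:ℂ) - β‖₊ : ℝ≥0∞) ^ (-s)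
            ≤ ENNReal.ofReal (((3/10)*(1+pβ))^(-s)) := by
          intro x hx
          refine dcpl_up_npow hs0.le (by positivity) ?_
          have htr : (x₀:ℂ) - β = ((x₀:ℂ) - (x:ℂ)) + ((x:ℂ) - β) := by ring
          have h1 : pβ ≤ ‖(x₀:ℂ) - (x:ℂ)‖ + ‖(x:ℂ) - β‖ := by
            rw [hpβdef, htr]; exact norm_add_le _ _
          have h2 : ‖(x₀:ℂ) - (x:ℂ)‖ < 2 := by
            rw [norm_sub_rev]; exact hxx₀ x hx
          nlinarith
        have hpt : ∀ x ∈ N, (‖(x:ℂ) - α‖₊ : ℝ≥0∞) ^ (-s) * (‖(x:ℂ) - γ‖₊ : ℝ≥0∞) ^ s *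
              (‖(x:ℂ) - β‖₊ : ℝ≥0∞) ^ (-s)
            ≤ (ENNReal.ofReal ((2*(1+pγ))^s) * ENNReal.ofReal (((3/10)*(1+pβ))^(-s)))
              * (‖(x:ℂ) - α‖₊ : ℝ≥0∞) ^ (-s) := by
          intro x hx
          have hre : (‖(x:ℂ) - α‖₊ : ℝ≥0∞) ^ (-s) * (‖(x:ℂ) - γ‖₊ : ℝ≥0∞) ^ s *
              (‖(x:ℂ) - β‖₊ : ℝ≥0∞) ^ (-s) = ((‖(x:ℂ) - γ‖₊ : ℝ≥0∞) ^ s *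
              (‖(x:ℂ) - β‖₊ : ℝ≥0∞) ^ (-s)) * (‖(x:ℂ) - α‖₊ : ℝ≥0∞) ^ (-s) := by ring
          rw [hre]
          exact mul_le_mul_left (mul_le_mul' (hf3 x hx) (hf2 x hx)) _
        have hint : ∫⁻ x in N, (‖(x:ℂ) - α‖₊ : ℝ≥0∞) ^ (-s) * (‖(x:ℂ) - γ‖₊ : ℝ≥0∞) ^ s *
              (‖(x:ℂ) - β‖₊ : ℝ≥0∞) ^ (-s) ∂μ
            ≤ (ENNReal.ofReal ((2*(1+pγ))^s) * ENNReal.ofReal (((3/10)*(1+pβ))^(-s)))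
              * (ENNReal.ofReal B * ENNReal.ofReal (2*1/(1-s))) := by
          calc ∫⁻ x in N, (‖(x:ℂ) - α‖₊ : ℝ≥0∞) ^ (-s) * (‖(x:ℂ) - γ‖₊ : ℝ≥0∞) ^ s *
                (‖(x:ℂ) - β‖₊ : ℝ≥0∞) ^ (-s) ∂μ
              ≤ ∫⁻ x in N, (ENNReal.ofReal ((2*(1+pγ))^s) *
                ENNReal.ofReal (((3/10)*(1+pβ))^(-s))) * (‖(x:ℂ) - α‖₊ : ℝ≥0∞) ^ (-s) ∂μ :=
                setLIntegral_mono (measurable_const.mul (dcpl_meas α (-s))) hpt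
            _ = (ENNReal.ofReal ((2*(1+pγ))^s) * ENNReal.ofReal (((3/10)*(1+pβ))^(-s)))
                * ∫⁻ x in N, (‖(x:ℂ) - α‖₊ : ℝ≥0∞) ^ (-s) ∂μ :=
                lintegral_const_mul _ (dcpl_meas α (-s))
            _ ≤ _ := mul_le_mul_right (hrest α s 1 hs0 hs1 le_rfl (by simpa using hNsub)) _
        refine le_trans hint ?_
        have hQ20 : (0:ℝ) ≤ ((3/10)*(1+pβ))^(-s) := Real.rpow_nonneg (by positivity) _
        have hcomb : (ENNReal.ofReal ((2*(1+pγ))^s) * ENNReal.ofReal (((3/10)*(1+pβ))^(-s)))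
              * (ENNReal.ofReal B * ENNReal.ofReal (2*1/(1-s)))
            = ENNReal.ofReal ((2*(1+pγ))^s * ((3/10)*(1+pβ))^(-s) * (B * (2*1/(1-s)))) := by
          rw [← ENNReal.ofReal_mul hB0, ← ENNReal.ofReal_mul hQ10,
            ← ENNReal.ofReal_mul (mul_nonneg hQ10 hQ20)]
        rw [hcomb]
        have hreal : (2*(1+pγ))^s * ((3/10)*(1+pβ))^(-s) * (B * (2*1/(1-s)))
            ≤ Cn * ((1/2) * Q) := by
          have e1 : (2/c₁)^s * (c₁*(1+pγ))^s = (2*(1+pγ))^s := by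
            rw [← Real.mul_rpow (by positivity) (by positivity)]
            congr 1
            field_simp
          have e3 : ((3/10:ℝ)*(1+pβ))^(-s) = (10/3:ℝ)^s * (1+pβ)^(-s) := by
            rw [Real.mul_rpow (by norm_num) (by positivity),
              show ((3:ℝ)/10) = ((10:ℝ)/3)⁻¹ by norm_num,
              Real.inv_rpow (by norm_num), ← Real.rpow_neg (by norm_num), neg_neg]
          have e4 : ((2*R+1)*(1+pβ))^(-s) = (2*R+1)^(-s) * (1+pβ)^(-s) :=
            Real.mul_rpow (by linarith) (by positivity)
          have e5 : (2*R+1)^s * (2*R+1)^(-s) = 1 := by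
            rw [← Real.rpow_add (by linarith : (0:ℝ) < 2*R+1),
              show s + -s = 0 by ring, Real.rpow_zero]
          have hkey : C6 * ((1/2) * Q)
              = (2*(1+pγ))^s * ((3/10)*(1+pβ))^(-s) * (B * (2*1/(1-s))) := by
            rw [hQdef, hC6def, e3, e4]
            rw [show (2/c₁)^s * ((10/3:ℝ)^s) * ((2*R+1)^s) * (4*B/(1-s)) *
                ((1/2) * ((c₁*(1+pγ))^s * ((2*R+1)^(-s) * (1+pβ)^(-s))))
              = ((2/c₁)^s * (c₁*(1+pγ))^s) * ((2*R+1)^s * (2*R+1)^(-s))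
                * ((10/3:ℝ)^s * (1+pβ)^(-s)) * (2*B/(1-s)) by ring]
            rw [e1, e5, mul_one]
            ring
          rw [← hkey]
          have h2 : (0:ℝ) ≤ (1/2) * Q := by positivity
          exact mul_le_mul_of_nonneg_right (le_max_right C5 C6) h2
        calc ENNReal.ofReal ((2*(1+pγ))^s * ((3/10)*(1+pβ))^(-s) * (B * (2*1/(1-s))))
            ≤ ENNReal.ofReal (Cn * ((1/2) * Q)) := ENNReal.ofReal_le_ofReal hreal
          _ = ENNReal.ofReal Cn * ENNReal.ofReal ((1/2) * Q) := ENNReal.ofReal_mul hCn0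
          _ ≤ ENNReal.ofReal Cn * ∫⁻ x, G x ∂μ := mul_le_mul_right hGlow _
          _ ≤ _ := mul_le_mul_right hGfin _
  -- combine
  calc ∫⁻ x, (‖(x:ℂ) - α‖₊ : ℝ≥0∞) ^ (-s) * (‖(x:ℂ) - γ‖₊ : ℝ≥0∞) ^ s *
        (‖(x:ℂ) - β‖₊ : ℝ≥0∞) ^ (-s) ∂μ
      = (∫⁻ x in N, (‖(x:ℂ) - α‖₊ : ℝ≥0∞) ^ (-s) * (‖(x:ℂ) - γ‖₊ : ℝ≥0∞) ^ s *
          (‖(x:ℂ) - β‖₊ : ℝ≥0∞) ^ (-s) ∂μ)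
        + ∫⁻ x in Nᶜ, (‖(x:ℂ) - α‖₊ : ℝ≥0∞) ^ (-s) * (‖(x:ℂ) - γ‖₊ : ℝ≥0∞) ^ s *
          (‖(x:ℂ) - β‖₊ : ℝ≥0∞) ^ (-s) ∂μ := (lintegral_add_compl _ hNmeas).symm
    _ ≤ ENNReal.ofReal Cn * ((ENNReal.ofReal ((2*R+1)^s) * ∫⁻ x, F x ∂μ) * ∫⁻ x, G x ∂μ)
        + (ENNReal.ofReal ((2*R+1)^s) * ∫⁻ x, F x ∂μ) * ∫⁻ x, G x ∂μ :=
        add_le_add hnearTot hfar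
    _ = (ENNReal.ofReal Cn * ENNReal.ofReal ((2*R+1)^s) + ENNReal.ofReal ((2*R+1)^s))
        * (∫⁻ x, G x ∂μ) * (∫⁻ x, F x ∂μ) := by ring
    _ = ENNReal.ofReal (Cn * (2*R+1)^s + (2*R+1)^s) * (∫⁻ x, G x ∂μ)
        * (∫⁻ x, F x ∂μ) := by
        rw [ENNReal.ofReal_add (mul_nonneg hCn0 (Real.rpow_nonneg (by linarith) s))
          (Real.rpow_nonneg (by linarith) s), ENNReal.ofReal_mul hCn0]
end
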